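/- Let A be an n×n ASM with p = σ₋(A) negative entries. Then there is a sequence of n×n ASMs A^(p) = A, A^(p−1), …, A^(0) such that A^(0) is a permutation matrix, σ₋(A^(s)) = s for all s, and h(A^(p)) ⪯* h(A^(p−1)) ⪯* … ⪯* h(A^(0)), where h(B) = Bᵀz_n with z_n = (n, n−1, …, 1), and x ⪯* y means all leading partial sums of x are at most those of y with equal total sums. -/

import Mathlib

open Finset

/-- A line (vector) of integers is "alternating" in the ASM sense:
all prefix sums are 0 or 1, and the total sum is 1. This is equivalent to the
nonzero entries being ±1, alternating in sign, beginning and ending with +1. -/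
def AltLine {n : ℕ} (v : Fin n → ℤ) : Prop :=
  (∀ t : Fin n, (∑ s ∈ Finset.univ.filter (fun s => s ≤ t), v s) = 0 ∨
      (∑ s ∈ Finset.univ.filter (fun s => s ≤ t), v s) = 1) ∧
  (∑ s, v s) = 1

/-- Alternating sign matrix. -/
def IsAsm {n : ℕ} (A : Matrix (Fin n) (Fin n) ℤ) : Prop :=
  (∀ i, AltLine (fun j => A i j)) ∧ (∀ j, AltLine (fun i => A i j))

/-- Alternating sign hypermatrix: every line in each of the three directions alternates. -/
def IsAshm {n : ℕ} (A : Fin n → Fin n → Fin n → ℤ) : Prop :=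
  (∀ j k, AltLine (fun i => A i j k)) ∧
  (∀ i k, AltLine (fun j => A i j k)) ∧
  (∀ i j, AltLine (fun k => A i j k))

/-- The ASHM-Latin square `L(A) = 1·A₁ + 2·A₂ + ⋯ + n·Aₙ` (planes indexed from 1). -/
def Lmat {n : ℕ} (A : Fin n → Fin n → Fin n → ℤ) (i j : Fin n) : ℤ :=
  ∑ k : Fin n, ((k.1 : ℤ) + 1) * A i j k

/-- Leading-partial-sum order `x ⪯* y`. -/
def PrecStar {n : ℕ} (x y : Fin n → ℤ) : Prop :=
  (∀ p : ℕ, (∑ j ∈ Finset.univ.filter (fun j : Fin n => j.1 < p), x j)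
      ≤ ∑ j ∈ Finset.univ.filter (fun j : Fin n => j.1 < p), y j) ∧
  (∑ j : Fin n, x j) = ∑ j : Fin n, y j

/-- Weighted horizontal projection `h(B) = Bᵀ zₙ` where `zₙ = (n, n-1, …, 1)`. -/
def hproj {n : ℕ} (B : Matrix (Fin n) (Fin n) ℤ) (j : Fin n) : ℤ :=
  ∑ i : Fin n, ((n - i.1 : ℕ) : ℤ) * B i j


namespace AsmAux
variable {n : ℕ}

/-- prefix sum up to (exclusive) natural cutoff `p` -/
def Pf (v : Fin n → ℤ) (p : ℕ) : ℤ :=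
  ∑ j ∈ Finset.univ.filter (fun j : Fin n => j.1 < p), v j

lemma Pf_zero (v : Fin n → ℤ) : Pf v 0 = 0 := by simp [Pf]

lemma Pf_succ (v : Fin n → ℤ) (t : Fin n) :
    Pf v (t.1 + 1) = Pf v t.1 + v t := by
  unfold Pf
  have h : (Finset.univ.filter (fun j : Fin n => j.1 < t.1 + 1)) =
      insert t (Finset.univ.filter (fun j : Fin n => j.1 < t.1)) := by
    ext s; simp [Fin.ext_iff]; omega
  rw [h, Finset.sum_insert (by simp)]; ring

lemma Pf_total (v : Fin n → ℤ) {p : ℕ} (hp : n ≤ p) : Pf v p = ∑ s, v s := by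
  unfold Pf
  congr 1
  ext s; simp; omega

lemma alt_pf {v : Fin n → ℤ} (h : AltLine v) (p : ℕ) : Pf v p = 0 ∨ Pf v p = 1 := by
  rcases Nat.lt_or_ge p 1 with hp | hp
  · interval_cases p; left; exact Pf_zero v
  rcases Nat.lt_or_ge (p - 1) n with hpn | hpn
  · have := h.1 ⟨p - 1, hpn⟩
    have he : (Finset.univ.filter (fun s => s ≤ (⟨p - 1, hpn⟩ : Fin n))) =
        (Finset.univ.filter (fun j : Fin n => j.1 < p)) := by
      ext s; simp [Fin.le_def]; omega
    rw [he] at this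
    exact this
  · right; rw [Pf_total v (by omega)]; exact h.2

lemma alt_total {v : Fin n → ℤ} (h : AltLine v) : Pf v n = 1 := by
  rw [Pf_total v le_rfl]; exact h.2

lemma entry_eq (v : Fin n → ℤ) (t : Fin n) : v t = Pf v (t.1 + 1) - Pf v t.1 := by
  rw [Pf_succ]; ring

lemma entry_mem {v : Fin n → ℤ} (h : AltLine v) (t : Fin n) : -1 ≤ v t ∧ v t ≤ 1 := by
  have := entry_eq v t
  rcases alt_pf h (t.1 + 1) with h1 | h1 <;> rcases alt_pf h t.1 with h2 | h2 <;> omega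

/-- entries with no -1 below a nonpositive prefix sum are all 0 -/
lemma all_zero {v : Fin n → ℤ} (h : AltLine v) (m : ℕ) (hm : Pf v m ≤ 0)
    (hne : ∀ s : Fin n, s.1 < m → v s ≠ -1) : ∀ s : Fin n, s.1 < m → v s = 0 := by
  have hnn : ∀ s ∈ Finset.univ.filter (fun j : Fin n => j.1 < m), 0 ≤ v s := by
    intro s hs
    simp at hs
    have := (entry_mem h s).1
    have := hne s hs
    omega
  have hz : Pf v m = 0 := le_antisymm hm (Finset.sum_nonneg hnn)
  intro s hs
  have := (Finset.sum_eq_zero_iff_of_nonneg hnn).mp hz s (by simp [hs])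
  exact this

lemma unique_one {v : Fin n → ℤ} (h : AltLine v) (m : ℕ) (hm : Pf v m = 1)
    (hne : ∀ s : Fin n, s.1 < m → v s ≠ -1) :
    ∃ t : Fin n, t.1 < m ∧ ∀ s : Fin n, s.1 < m → v s = if s = t then 1 else 0 := by
  have hnn : ∀ s ∈ Finset.univ.filter (fun j : Fin n => j.1 < m), 0 ≤ v s := by
    intro s hs; simp at hs
    have := (entry_mem h s).1; have := hne s hs; omega
  have hex : ∃ t : Fin n, t.1 < m ∧ v t = 1 := by
    by_contra hc
    push_neg at hc
    have : Pf v m = 0 := Finset.sum_eq_zero (by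
      intro s hs; simp at hs
      have h1 := (entry_mem h s).2
      have h2 := hnn s (by simp [hs])
      have := hc s hs
      omega)
    omega
  obtain ⟨t, ht, hvt⟩ := hex
  refine ⟨t, ht, fun s hs => ?_⟩
  by_cases hst : s = t
  · simp [hst, hvt]
  · simp only [if_neg hst]
    have hsub : ({t, s} : Finset (Fin n)) ⊆ Finset.univ.filter (fun j : Fin n => j.1 < m) := by
      intro x hx; simp at hx; rcases hx with rfl | rfl <;> simp [ht, hs]
    have hle : ∑ x ∈ ({t, s} : Finset (Fin n)), v x ≤ Pf v m :=
      Finset.sum_le_sum_of_subset_of_nonneg hsub (fun x hx _ => hnn x hx)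
    rw [Finset.sum_pair (fun hh => hst hh.symm)] at hle
    have := hnn s (by simp [hs])
    omega

lemma Pf_single (u : Fin n) (c : ℤ) (p : ℕ) :
    Pf (fun b => if b = u then c else 0) p = if u.1 < p then c else 0 := by
  unfold Pf
  rw [Finset.sum_ite_eq' _ u (fun _ => c)]
  simp only [Finset.mem_filter, Finset.mem_univ, true_and]

lemma Pf_add (v w : Fin n → ℤ) (p : ℕ) : Pf (fun b => v b + w b) p = Pf v p + Pf w p := by
  unfold Pf; rw [Finset.sum_add_distrib]

lemma alt_of_pf {v : Fin n → ℤ} (h1 : ∀ p : ℕ, Pf v p = 0 ∨ Pf v p = 1) (h2 : Pf v n = 1) :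
    AltLine v := by
  constructor
  · intro t
    have he : (Finset.univ.filter (fun s => s ≤ t)) =
        (Finset.univ.filter (fun j : Fin n => j.1 < t.1 + 1)) := by
      ext s
      simp only [Finset.mem_filter, Finset.mem_univ, true_and, Fin.le_def]
      omega
    rw [he]; exact h1 (t.1 + 1)
  · rw [← Pf_total v le_rfl]; exact h2

def negcard (A : Matrix (Fin n) (Fin n) ℤ) : ℕ :=
  (Finset.univ.filter (fun q : Fin n × Fin n => A q.1 q.2 = -1)).card

/-- an AltLine shifted by +c on [u1,u2) prefix windows stays alternating -/
lemma alt_shift {v : Fin n → ℤ} (h : AltLine v) (u1 u2 : Fin n) (c : ℤ)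
    (h12 : u1.1 < u2.1)
    (hmid : ∀ p : ℕ, u1.1 < p → p ≤ u2.1 → Pf v p + c = 0 ∨ Pf v p + c = 1) :
    AltLine (fun b => v b + ((if b = u1 then c else 0) + (if b = u2 then -c else 0))) := by
  have hPf : ∀ p : ℕ, Pf (fun b => v b + ((if b = u1 then c else 0) + (if b = u2 then -c else 0))) p
      = Pf v p + ((if u1.1 < p then c else 0) + (if u2.1 < p then -c else 0)) := by
    intro p
    rw [Pf_add, Pf_add, Pf_single, Pf_single]
  apply alt_of_pf
  · intro p
    rw [hPf]
    rcases Nat.lt_or_ge u1.1 p with hp1 | hp1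
    · rcases Nat.lt_or_ge u2.1 p with hp2 | hp2
      · simpa [hp1, hp2] using alt_pf h p
      · have := hmid p hp1 hp2
        simp only [if_pos hp1, if_neg (by omega : ¬ u2.1 < p)]
        omega
    · simp only [if_neg (by omega : ¬ u1.1 < p), if_neg (by omega : ¬ u2.1 < p)]
      simpa using alt_pf h p
  · rw [hPf]
    have h1 : u1.1 < n := u1.2
    have h2 : u2.1 < n := u2.2
    rw [if_pos h1, if_pos h2, alt_total h]
    ring

lemma step (A : Matrix (Fin n) (Fin n) ℤ) (hA : IsAsm A) (hpos : 0 < negcard A) :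
    ∃ A', IsAsm A' ∧ negcard A' + 1 = negcard A ∧ PrecStar (hproj A) (hproj A') := by
  have hne : (Finset.univ.filter (fun q : Fin n × Fin n => A q.1 q.2 = -1)).Nonempty :=
    Finset.card_pos.mp hpos
  obtain ⟨q0, hq0mem, hq0min⟩ :=
    Finset.exists_min_image _ (fun q : Fin n × Fin n => q.1.1 + q.2.1) hne
  obtain ⟨k, l⟩ := q0
  have hkl : A k l = -1 := by simpa using (Finset.mem_filter.mp hq0mem).2
  have hmin : ∀ a b : Fin n, A a b = -1 → k.1 + l.1 ≤ a.1 + b.1 := by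
    intro a b hab
    exact hq0min (a, b) (by simp [hab])
  -- column l : prefix sum above k is 1, no -1 above k
  have hcl : AltLine (fun a => A a l) := hA.2 l
  have hclk : Pf (fun a => A a l) k.1 = 1 := by
    have hs := Pf_succ (fun a => A a l) k
    simp only [hkl] at hs
    rcases alt_pf hcl (k.1 + 1) with h1 | h1 <;> rcases alt_pf hcl k.1 with h2 | h2 <;> omega
  have hclne : ∀ q : Fin n, q.1 < k.1 → A q l ≠ -1 := by
    intro q hq hcon
    have := hmin q l hcon
    omega
  obtain ⟨i, hik, hcoll⟩ := unique_one hcl k.1 hclk hclne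
  -- row k : prefix sum left of l is 1, no -1 left
  have hrk : AltLine (fun b => A k b) := hA.1 k
  have hrkl : Pf (fun b => A k b) l.1 = 1 := by
    have hs := Pf_succ (fun b => A k b) l
    simp only [hkl] at hs
    rcases alt_pf hrk (l.1 + 1) with h1 | h1 <;> rcases alt_pf hrk l.1 with h2 | h2 <;> omega
  have hrkne : ∀ m : Fin n, m.1 < l.1 → A k m ≠ -1 := by
    intro m hm hcon
    have := hmin k m hcon
    omega
  obtain ⟨j, hjl, hrowk⟩ := unique_one hrk l.1 hrkl hrkne
  have hAil : A i l = 1 := by simpa using hcoll i hik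
  have hAkj : A k j = 1 := by simpa using hrowk j hjl
  -- column j : all zero above k
  have hcj : AltLine (fun a => A a j) := hA.2 j
  have hcolj : ∀ q : Fin n, q.1 < k.1 → A q j = 0 := by
    apply all_zero hcj
    · have hs := Pf_succ (fun a => A a j) k
      simp only [hAkj] at hs
      rcases alt_pf hcj (k.1 + 1) with h1 | h1 <;> rcases alt_pf hcj k.1 with h2 | h2 <;> omega
    · intro q hq hcon
      have := hmin q j hcon
      omega
  -- row i : all zero left of l
  have hri : AltLine (fun b => A i b) := hA.1 i
  have hrowi : ∀ m : Fin n, m.1 < l.1 → A i m = 0 := by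
    apply all_zero hri
    · have hs := Pf_succ (fun b => A i b) l
      simp only [hAil] at hs
      rcases alt_pf hri (l.1 + 1) with h1 | h1 <;> rcases alt_pf hri l.1 with h2 | h2 <;> omega
    · intro m hm hcon
      have := hmin i m hcon
      omega
  have hAij : A i j = 0 := hcolj i hik
  have hikne : i ≠ k := fun h => by rw [h] at hik; omega
  have hjlne : j ≠ l := fun h => by rw [h] at hjl; omega
  -- the modified matrix
  set E : Matrix (Fin n) (Fin n) ℤ := fun a b =>
    (if a = i then ((if b = j then (1:ℤ) else 0) + (if b = l then -1 else 0)) else 0) +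
    (if a = k then ((if b = j then (-1:ℤ) else 0) + (if b = l then 1 else 0)) else 0) with hE
  set A' : Matrix (Fin n) (Fin n) ℤ := fun a b => A a b + E a b with hA'
  -- rows of A'
  have hrows : ∀ a, AltLine (fun b => A' a b) := by
    intro a
    by_cases hai : a = i
    · subst hai
      have : (fun b => A' a b) =
          (fun b => A a b + ((if b = j then (1:ℤ) else 0) + (if b = l then -(1:ℤ) else 0))) := by
        funext b
        simp [hA', hE, hikne]
      rw [this]
      apply alt_shift hri j l 1 hjl
      intro p hp1 hp2
      have hz : Pf (fun b => A a b) p = 0 := by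
        apply Finset.sum_eq_zero
        intro m hm
        simp at hm
        exact hrowi m (by omega)
      omega
    · by_cases hak : a = k
      · subst hak
        have : (fun b => A' a b) =
            (fun b => A a b + ((if b = j then (-1:ℤ) else 0) + (if b = l then -(-1:ℤ) else 0))) := by
          funext b
          simp [hA', hE, Ne.symm hikne]
        rw [this]
        apply alt_shift hrk j l (-1) hjl
        intro p hp1 hp2
        have hz : Pf (fun b => A a b) p = 1 := by
          have : Pf (fun b => A a b) p = Pf (fun b => if b = j then (1:ℤ) else 0) p := by
            apply Finset.sum_congr rfl
            intro m hm
            simp only [Finset.mem_filter, Finset.mem_univ, true_and] at hm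
            exact hrowk m (by omega)
          rw [this, Pf_single, if_pos hp1]
        omega
      · have : (fun b => A' a b) = (fun b => A a b) := by
          funext b
          simp [hA', hE, hai, hak]
        rw [this]
        exact hA.1 a
  -- columns of A'
  have hcols : ∀ b, AltLine (fun a => A' a b) := by
    intro b
    by_cases hbj : b = j
    · subst hbj
      have : (fun a => A' a b) =
          (fun a => A a b + ((if a = i then (1:ℤ) else 0) + (if a = k then -(1:ℤ) else 0))) := by
        funext a
        simp [hA', hE, hjlne]
      rw [this]
      apply alt_shift hcj i k 1 hik
      intro p hp1 hp2
      have hz : Pf (fun a => A a b) p = 0 := by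
        apply Finset.sum_eq_zero
        intro q hq
        simp at hq
        exact hcolj q (by omega)
      omega
    · by_cases hbl : b = l
      · subst hbl
        have : (fun a => A' a b) =
            (fun a => A a b + ((if a = i then (-1:ℤ) else 0) + (if a = k then -(-1:ℤ) else 0))) := by
          funext a
          simp [hA', hE, Ne.symm hjlne]
        rw [this]
        apply alt_shift hcl i k (-1) hik
        intro p hp1 hp2
        have hz : Pf (fun a => A a b) p = 1 := by
          have : Pf (fun a => A a b) p = Pf (fun a => if a = i then (1:ℤ) else 0) p := by
            apply Finset.sum_congr rfl
            intro q hq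
            simp only [Finset.mem_filter, Finset.mem_univ, true_and] at hq
            exact hcoll q (by omega)
          rw [this, Pf_single, if_pos hp1]
        omega
      · have : (fun a => A' a b) = (fun a => A a b) := by
          funext a
          simp [hA', hE, hbj, hbl]
        rw [this]
        exact hA.2 b
  refine ⟨A', ⟨hrows, hcols⟩, ?_, ?_⟩
  · -- count of -1 entries
    have hset : (Finset.univ.filter (fun q : Fin n × Fin n => A' q.1 q.2 = -1)) =
        (Finset.univ.filter (fun q : Fin n × Fin n => A q.1 q.2 = -1)).erase (k, l) := by
      ext ⟨a, b⟩
      simp only [Finset.mem_filter, Finset.mem_univ, true_and, Finset.mem_erase, Prod.mk.injEq,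
        not_and]
      by_cases hai : a = i <;> by_cases hak : a = k <;>
        by_cases hbj : b = j <;> by_cases hbl : b = l <;>
        first
        | (exfalso; first | exact hikne (hai ▸ hak ▸ rfl) | exact hjlne (hbj ▸ hbl ▸ rfl))
        | (subst_vars
           simp [hA', hE, hikne, Ne.symm hikne, hjlne, Ne.symm hjlne, hAij, hAil, hAkj, hkl]
           try omega)
    rw [negcard, negcard, hset, Finset.card_erase_of_mem hq0mem]
    have : 0 < (Finset.univ.filter (fun q : Fin n × Fin n => A q.1 q.2 = -1)).card := hpos
    omega
  · -- PrecStar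
    set c : ℤ := ((k.1 : ℤ) - (i.1 : ℤ)) with hc
    have hcpos : 0 < c := by simp [hc]; omega
    have hwi : ((n - i.1 : ℕ) : ℤ) - ((n - k.1 : ℕ) : ℤ) = c := by
      have h1 : i.1 < n := i.2
      have h2 : k.1 < n := k.2
      push_cast [Nat.cast_sub (le_of_lt h1), Nat.cast_sub (le_of_lt h2)]
      omega
    have hh : ∀ m : Fin n, hproj A' m =
        hproj A m + ((if m = j then c else 0) + (if m = l then -c else 0)) := by
      intro m
      unfold hproj
      have hsplit : ∀ a : Fin n, ((n - a.1 : ℕ) : ℤ) * A' a m =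
          ((n - a.1 : ℕ) : ℤ) * A a m + ((n - a.1 : ℕ) : ℤ) * E a m := by
        intro a
        show ((n - a.1 : ℕ) : ℤ) * (A a m + E a m) = _
        ring
      rw [Finset.sum_congr rfl (fun a _ => hsplit a), Finset.sum_add_distrib]
      congr 1
      have hEsum : ∀ a : Fin n, ((n - a.1 : ℕ) : ℤ) * E a m =
          (if a = i then ((n - i.1 : ℕ) : ℤ) * ((if m = j then (1:ℤ) else 0) + (if m = l then -1 else 0)) else 0) +
          (if a = k then ((n - k.1 : ℕ) : ℤ) * ((if m = j then (-1:ℤ) else 0) + (if m = l then 1 else 0)) else 0) := by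
        intro a
        by_cases hai : a = i <;> by_cases hak : a = k
        · exact absurd (hai ▸ hak ▸ rfl : i = k) hikne
        · subst hai; simp [hE, hak]
        · subst hak; simp [hE, Ne.symm hikne, hai]
        · simp [hE, hai, hak]
      rw [Finset.sum_congr rfl (fun a _ => hEsum a), Finset.sum_add_distrib,
        Finset.sum_ite_eq' Finset.univ i, Finset.sum_ite_eq' Finset.univ k]
      simp only [Finset.mem_univ, if_true]
      by_cases hmj : m = j <;> by_cases hml : m = l
      · exact absurd (hmj ▸ hml ▸ rfl : j = l) hjlne
      · simp [hmj, hml, hjlne, Ne.symm hjlne]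
        try (push_cast; omega)
      · simp [hmj, hml, hjlne, Ne.symm hjlne]
        try (push_cast; omega)
      · simp [hmj, hml]
    constructor
    · intro p
      have h1 : (∑ m ∈ Finset.univ.filter (fun m : Fin n => m.1 < p), hproj A' m) =
          (∑ m ∈ Finset.univ.filter (fun m : Fin n => m.1 < p), hproj A m) +
            ((if j.1 < p then c else 0) + (if l.1 < p then -c else 0)) := by
        rw [Finset.sum_congr rfl (fun m _ => hh m)]
        rw [show (∑ m ∈ Finset.univ.filter (fun m : Fin n => m.1 < p),
            (hproj A m + ((if m = j then c else 0) + (if m = l then -c else 0)))) =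
            Pf (fun m => hproj A m + ((if m = j then c else 0) + (if m = l then -c else 0))) p from rfl]
        rw [Pf_add, Pf_add, Pf_single, Pf_single]
        rfl
      rw [h1]
      have : (0:ℤ) ≤ (if j.1 < p then c else 0) + (if l.1 < p then -c else 0) := by
        split_ifs <;> omega
      omega
    · have h1 : (∑ m : Fin n, hproj A' m) = ∑ m : Fin n, (hproj A m +
          ((if m = j then c else 0) + (if m = l then -c else 0))) :=
        Finset.sum_congr rfl (fun m _ => hh m)
      rw [h1, Finset.sum_add_distrib, Finset.sum_add_distrib,
        Finset.sum_ite_eq' Finset.univ j, Finset.sum_ite_eq' Finset.univ l]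
      simp


lemma perm_of_no_neg {n : ℕ} (A : Matrix (Fin n) (Fin n) ℤ) (hA : IsAsm A)
    (h0 : negcard A = 0) :
    ∃ σ : Equiv.Perm (Fin n), ∀ i j : Fin n, A i j = if σ i = j then (1:ℤ) else 0 := by
  have hne : ∀ a b : Fin n, A a b ≠ -1 := by
    intro a b hab
    have := Finset.card_eq_zero.mp h0
    have hmem : (a, b) ∈ (Finset.univ.filter (fun q : Fin n × Fin n => A q.1 q.2 = -1)) := by
      simp [hab]
    rw [this] at hmem
    exact absurd hmem (Finset.notMem_empty _)
  have hrow : ∀ a : Fin n, ∃ t : Fin n, t.1 < n ∧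
      ∀ s : Fin n, s.1 < n → A a s = if s = t then 1 else 0 := by
    intro a
    exact unique_one (hA.1 a) n (alt_total (hA.1 a)) (fun s _ => hne a s)
  choose t ht1 ht2 using hrow
  have hval : ∀ a b : Fin n, A a b = if b = t a then 1 else 0 := fun a b => ht2 a b b.2
  have hinj : Function.Injective t := by
    intro a1 a2 h12
    by_contra hc
    have hcol : Pf (fun a => A a (t a1)) n = 1 := alt_total (hA.2 (t a1))
    have hnn : ∀ a ∈ Finset.univ.filter (fun q : Fin n => q.1 < n), 0 ≤ A a (t a1) := by
      intro a _
      rw [hval a (t a1)]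
      split_ifs <;> omega
    have hsub : ({a1, a2} : Finset (Fin n)) ⊆ Finset.univ.filter (fun q : Fin n => q.1 < n) := by
      intro x _; simp [x.2]
    have hle : ∑ x ∈ ({a1, a2} : Finset (Fin n)), A x (t a1) ≤ Pf (fun a => A a (t a1)) n :=
      Finset.sum_le_sum_of_subset_of_nonneg hsub (fun x hx _ => hnn x hx)
    rw [Finset.sum_pair hc] at hle
    have h1 : A a1 (t a1) = 1 := by rw [hval]; simp
    have h2 : A a2 (t a1) = 1 := by rw [hval, h12]; simp
    omega
  refine ⟨Equiv.ofBijective t ((Finite.injective_iff_bijective).mp hinj), ?_⟩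
  intro a b
  rw [hval a b]
  by_cases hb : b = t a
  · simp [hb, Equiv.ofBijective]
  · rw [if_neg hb, if_neg]
    intro hcon
    exact hb hcon.symm

open Classical in
noncomputable def nxt {n : ℕ} (A : Matrix (Fin n) (Fin n) ℤ) : Matrix (Fin n) (Fin n) ℤ :=
  if h : ∃ A', IsAsm A' ∧ negcard A' + 1 = negcard A ∧ PrecStar (hproj A) (hproj A')
  then h.choose else A

lemma nxt_spec {n : ℕ} (A : Matrix (Fin n) (Fin n) ℤ) (hA : IsAsm A) (hpos : 0 < negcard A) :
    IsAsm (nxt A) ∧ negcard (nxt A) + 1 = negcard A ∧ PrecStar (hproj A) (hproj (nxt A)) := by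
  have h := step A hA hpos
  unfold nxt
  rw [dif_pos h]
  exact h.choose_spec

end AsmAux

theorem stmt12 {n : ℕ} (A : Matrix (Fin n) (Fin n) ℤ) (hA : IsAsm A) (p : ℕ)
    (hp : p = (Finset.univ.filter (fun q : Fin n × Fin n => A q.1 q.2 = -1)).card) :
    ∃ f : ℕ → Matrix (Fin n) (Fin n) ℤ,
      f p = A ∧
      (∀ s ≤ p, IsAsm (f s) ∧
        (Finset.univ.filter (fun q : Fin n × Fin n => f s q.1 q.2 = -1)).card = s) ∧
      (∃ σ : Equiv.Perm (Fin n), ∀ i j : Fin n,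
          f 0 i j = if σ i = j then (1 : ℤ) else 0) ∧
      (∀ s, s < p → PrecStar (hproj (f (s + 1))) (hproj (f s))) := by
  classical
  open AsmAux in
  have key : ∀ t : ℕ, t ≤ p → IsAsm (nxt^[t] A) ∧ negcard (nxt^[t] A) = p - t := by
    intro t
    induction t with
    | zero =>
      intro _
      exact ⟨hA, by show negcard A = p - 0; rw [hp]; rfl⟩
    | succ t ih =>
      intro ht
      obtain ⟨h1, h2⟩ := ih (by omega)
      have hpos : 0 < negcard (nxt^[t] A) := by omega
      obtain ⟨g1, g2, _⟩ := nxt_spec _ h1 hpos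
      rw [Function.iterate_succ_apply']
      exact ⟨g1, by omega⟩
  refine ⟨fun s => AsmAux.nxt^[p - s] A, by simp, ?_, ?_, ?_⟩
  · intro s hs
    obtain ⟨h1, h2⟩ := key (p - s) (by omega)
    exact ⟨h1, by rw [show (Finset.univ.filter
      (fun q : Fin n × Fin n => (AsmAux.nxt^[p - s] A) q.1 q.2 = -1)).card
      = AsmAux.negcard (AsmAux.nxt^[p - s] A) from rfl, h2]; omega⟩
  · obtain ⟨h1, h2⟩ := key p le_rfl
    simpa using AsmAux.perm_of_no_neg _ h1 (by omega)
  · intro s hs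
    obtain ⟨h1, h2⟩ := key (p - s - 1) (by omega)
    have hpos : 0 < AsmAux.negcard (AsmAux.nxt^[p - s - 1] A) := by omega
    obtain ⟨_, _, g3⟩ := AsmAux.nxt_spec _ h1 hpos
    have he1 : p - (s + 1) = p - s - 1 := by omega
    have he2 : AsmAux.nxt^[p - s] A = AsmAux.nxt (AsmAux.nxt^[p - s - 1] A) := by
      conv_lhs => rw [show p - s = (p - s - 1) + 1 from by omega]
      rw [Function.iterate_succ_apply']
    show PrecStar (hproj (AsmAux.nxt^[p - (s + 1)] A)) (hproj (AsmAux.nxt^[p - s] A))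
    rw [he1, he2]
    exact g3
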